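/- Suppose each of n agents has a matroid rank valuation v_i on subsets of a finite set O of items. Then there exists an allocation A that is simultaneously utilitarian optimal and envy-free up to one good (EF1). -/

import Mathlib

section MRF
variable {O : Type*} [DecidableEq O] (v : Finset O → ℤ)
  (h0 : v ∅ = 0)
  (hb : ∀ (S : Finset O) (o : O), o ∉ S → v (insert o S) - v S = 0 ∨ v (insert o S) - v S = 1)
  (hs : ∀ (S T : Finset O), S ⊆ T → ∀ o ∉ T, v (insert o T) - v T ≤ v (insert o S) - v S)

include hb in
lemma mrf_gain01 {S : Finset O} {o : O} (ho : o ∉ S) :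
    v S ≤ v (insert o S) ∧ v (insert o S) ≤ v S + 1 := by
  rcases hb S o ho with h | h <;> constructor <;> linarith

include hb in
lemma mrf_mono {S T : Finset O} (h : S ⊆ T) : v S ≤ v T := by
  classical
  have aux : ∀ D : Finset O, v S ≤ v (S ∪ D) := by
    intro D
    induction D using Finset.induction_on with
    | empty => simp
    | @insert a D ha ih =>
      rw [Finset.union_insert]
      by_cases h2 : a ∈ S ∪ D
      · rwa [Finset.insert_eq_self.2 h2]
      · exact le_trans ih (mrf_gain01 v hb h2).1
  have := aux T
  rwa [Finset.union_eq_right.2 h] at this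

include h0 hb in
lemma mrf_nonneg (S : Finset O) : 0 ≤ v S := h0 ▸ mrf_mono v hb (Finset.empty_subset S)

include h0 hb in
lemma mrf_le_card (S : Finset O) : v S ≤ S.card := by
  classical
  induction S using Finset.induction_on with
  | empty => simp [h0]
  | @insert a S ha ih =>
    have := (mrf_gain01 v hb ha).2
    rw [Finset.card_insert_of_notMem ha]
    push_cast
    linarith

include hb hs in
lemma mrf_exch {A B : Finset O} (h : v A < v B) :
    ∃ o ∈ B, o ∉ A ∧ v (insert o A) = v A + 1 := by
  classical
  by_contra hc
  push_neg at hc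
  have h0g : ∀ o ∈ B, o ∉ A → v (insert o A) = v A := by
    intro o hoB hoA
    rcases hb A o hoA with h' | h'
    · linarith
    · exact absurd (by linarith) (hc o hoB hoA)
  have key : ∀ D : Finset O, D ⊆ B → v (A ∪ D) = v A := by
    intro D
    induction D using Finset.induction_on with
    | empty => simp
    | @insert a D ha ih =>
      intro hsub'
      have haB : a ∈ B := hsub' (Finset.mem_insert_self a D)
      have hD : D ⊆ B := (Finset.insert_subset_iff.mp hsub').2
      rw [Finset.union_insert]
      by_cases h2 : a ∈ A ∪ D
      · rw [Finset.insert_eq_self.2 h2]; exact ih hD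
      · have haA : a ∉ A := fun h' => h2 (Finset.mem_union_left _ h')
        have g1 := hs A (A ∪ D) Finset.subset_union_left a h2
        rw [h0g a haB haA] at g1
        have g2 := (mrf_gain01 v hb h2).1
        have := ih hD
        linarith
  have hAB := key B (subset_refl B)
  have hm : v B ≤ v (A ∪ B) := mrf_mono v hb Finset.subset_union_right
  linarith

include h0 hb hs in
lemma mrf_clean (S : Finset O) : ∃ T ⊆ S, v T = v S ∧ (T.card : ℤ) = v T := by
  classical
  set 𝒯 := S.powerset.filter (fun T => (T.card : ℤ) = v T) with h𝒯
  have hne : 𝒯.Nonempty := ⟨∅, by simp [h𝒯, h0]⟩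
  obtain ⟨T, hT, hmax⟩ := 𝒯.exists_max_image Finset.card hne
  simp only [h𝒯, Finset.mem_filter, Finset.mem_powerset] at hT
  refine ⟨T, hT.1, ?_, hT.2⟩
  by_contra hne'
  have hlt : v T < v S := lt_of_le_of_ne (mrf_mono v hb hT.1) hne'
  obtain ⟨o, hoS, hoT, hins⟩ := mrf_exch v hb hs hlt
  have hmem : insert o T ∈ 𝒯 := by
    simp only [h𝒯, Finset.mem_filter, Finset.mem_powerset]
    refine ⟨Finset.insert_subset hoS hT.1, ?_⟩
    rw [Finset.card_insert_of_notMem hoT, hins]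
    push_cast
    linarith [hT.2]
  have := hmax _ hmem
  rw [Finset.card_insert_of_notMem hoT] at this
  omega

end MRF

/-- An allocation: bundles are pairwise disjoint. -/
def IsAlloc {O : Type*} [DecidableEq O] {n : ℕ} (A : Fin n → Finset O) : Prop :=
  ∀ i j, i ≠ j → Disjoint (A i) (A j)

/-- Utilitarian social welfare. -/
def USW {O : Type*} {n : ℕ} (v : Fin n → Finset O → ℤ)
    (A : Fin n → Finset O) : ℤ :=
  ∑ i, v i (A i)

/-- Envy-freeness up to one good. -/
def EF1 {O : Type*} [DecidableEq O] {n : ℕ} (v : Fin n → Finset O → ℤ)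
    (A : Fin n → Finset O) : Prop :=
  ∀ i j, v i (A j) ≤ v i (A i) ∨ ∃ o ∈ A j, v i (A j \ {o}) ≤ v i (A i)

/-- For matroid rank valuations, there exists an allocation
that is simultaneously utilitarian optimal and EF1. -/
theorem exists_utilOpt_EF1
    {O : Type*} [DecidableEq O] [Fintype O] {n : ℕ}
    (v : Fin n → Finset O → ℤ)
    (h0 : ∀ i, v i ∅ = 0)
    (hbin : ∀ i (S : Finset O) (o : O), o ∉ S →
      v i (insert o S) - v i S = 0 ∨ v i (insert o S) - v i S = 1)
    (hsub : ∀ i (S T : Finset O), S ⊆ T → ∀ o ∉ T,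
      v i (insert o T) - v i T ≤ v i (insert o S) - v i S) :
    ∃ A : Fin n → Finset O, IsAlloc A ∧
      (∀ B : Fin n → Finset O, IsAlloc B → USW v B ≤ USW v A) ∧
      EF1 v A := by
  classical
  -- an optimal allocation exists
  have hne : (Finset.univ.filter (fun A : Fin n → Finset O => IsAlloc A)).Nonempty :=
    ⟨fun _ => ∅, Finset.mem_filter.2 ⟨Finset.mem_univ _, fun i j _ => Finset.disjoint_empty_left _⟩⟩
  obtain ⟨A0, hA0mem, hA0max⟩ := Finset.exists_max_image _ (USW v) hne
  simp only [Finset.mem_filter, Finset.mem_univ, true_and] at hA0mem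
  have hA0opt : ∀ B, IsAlloc B → USW v B ≤ USW v A0 := fun B hB =>
    hA0max B (by simp [hB])
  -- clean it
  choose f hf1 hf2 hf3 using fun i => mrf_clean (v i) (h0 i) (hbin i) (hsub i) (A0 i)
  have hA1alloc : IsAlloc f := fun i j hij =>
    Finset.disjoint_of_subset_left (hf1 i)
      (Finset.disjoint_of_subset_right (hf1 j) (hA0mem i j hij))
  have hA1usw : USW v f = USW v A0 := Finset.sum_congr rfl (fun i _ => hf2 i)
  -- the set of clean optimal allocations
  set G := Finset.univ.filter
      (fun A : Fin n → Finset O =>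
        IsAlloc A ∧ USW v A = USW v A0 ∧ ∀ i, ((A i).card : ℤ) = v i (A i)) with hG
  have hGne : G.Nonempty := ⟨f, by
    simp only [hG, Finset.mem_filter, Finset.mem_univ, true_and]
    exact ⟨hA1alloc, hA1usw, hf3⟩⟩
  obtain ⟨A, hAmem, hAmin⟩ := G.exists_min_image (fun A => ∑ k, (A k).card ^ 2) hGne
  simp only [hG, Finset.mem_filter, Finset.mem_univ, true_and] at hAmem
  obtain ⟨hAlloc, hAusw, hAclean⟩ := hAmem
  refine ⟨A, hAlloc, fun B hB => hAusw ▸ hA0opt B hB, ?_⟩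
  -- EF1
  intro i j
  by_cases hij : i = j
  · subst hij; left; exact le_refl _
  by_contra hc
  push_neg at hc
  obtain ⟨henvy, hstrong⟩ := hc
  obtain ⟨o, hoAj, hoAi, hins⟩ := mrf_exch (v i) (hbin i) (hsub i) henvy
  have hoAk : ∀ k, k ≠ j → o ∉ A k := by
    intro k hk hok
    exact (Finset.disjoint_left.mp (hAlloc k j hk)) hok hoAj
  -- the swapped allocation
  set B : Fin n → Finset O :=
      fun k => if k = i then insert o (A i) else if k = j then A j \ {o} else A k with hBdef
  have hBi : B i = insert o (A i) := by simp [hBdef]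
  have hBj : B j = A j \ {o} := by simp [hBdef, hij, Ne.symm hij]
  have hBk : ∀ k, k ≠ i → k ≠ j → B k = A k := by
    intro k h1 h2; simp [hBdef, h1, h2]
  have hmemB : ∀ m x, x ∈ B m → (x ∈ A m ∧ x ≠ o) ∨ (x = o ∧ m = i) := by
    intro m x hx
    by_cases hmi : m = i
    · subst hmi
      rw [hBi, Finset.mem_insert] at hx
      rcases hx with rfl | hx
      · exact Or.inr ⟨rfl, rfl⟩
      · exact Or.inl ⟨hx, fun h => hoAi (h ▸ hx)⟩
    by_cases hmj : m = j
    · subst hmj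
      rw [hBj, Finset.mem_sdiff, Finset.mem_singleton] at hx
      exact Or.inl hx
    · rw [hBk m hmi hmj] at hx
      exact Or.inl ⟨hx, fun h => hoAk m hmj (h ▸ hx)⟩
  have hBalloc : IsAlloc B := by
    intro k l hkl
    rw [Finset.disjoint_left]
    intro x hxk hxl
    rcases hmemB k x hxk with ⟨hk1, hk2⟩ | ⟨rfl, rfl⟩
    · rcases hmemB l x hxl with ⟨hl1, hl2⟩ | ⟨rfl, _⟩
      · exact (Finset.disjoint_left.mp (hAlloc k l hkl)) hk1 hl1
      · exact hk2 rfl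
    · rcases hmemB l x hxl with ⟨_, hl2⟩ | ⟨_, rfl⟩
      · exact hl2 rfl
      · exact hkl rfl
  -- marginal of o for agent j
  have hAjo : insert o (A j \ {o}) = A j := by
    rw [Finset.insert_eq, Finset.union_comm, Finset.sdiff_union_self_eq_union]
    simp [Finset.union_eq_left.2 (Finset.singleton_subset_iff.2 hoAj)]
  have hoAj' : o ∉ A j \ {o} := by simp
  set d : ℤ := v j (A j) - v j (A j \ {o}) with hd
  have hd01 : d = 0 ∨ d = 1 := by
    have := hbin j (A j \ {o}) o hoAj'
    rw [hAjo] at this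
    exact this
  -- USW change
  have hUSW : USW v B = USW v A + (1 - d) := by
    have hterm : ∀ k, v k (B k) =
        v k (A k) + ((if k = i then (1:ℤ) else 0) + (if k = j then -d else 0)) := by
      intro k
      by_cases hki : k = i
      · subst hki
        rw [hBi, hins]
        simp [hij]
      by_cases hkj : k = j
      · subst hkj
        rw [hBj, if_neg hki, if_pos rfl, hd]
        ring
      · rw [hBk k hki hkj]
        simp [hki, hkj]
    rw [USW, USW]
    simp only [hterm]
    rw [Finset.sum_add_distrib, Finset.sum_add_distrib]
    simp [Finset.sum_ite_eq']
    ring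
  -- optimality forces d = 1
  have hBle : USW v B ≤ USW v A := hAusw ▸ hA0opt B hBalloc
  have hd1 : d = 1 := by
    rcases hd01 with h | h
    · exfalso; rw [hUSW, h] at hBle; linarith
    · exact h
  have hUSWeq : USW v B = USW v A0 := by rw [hUSW, hd1, hAusw]; ring
  -- B is clean
  have hcAj1 : 1 ≤ (A j).card := Finset.card_pos.2 ⟨o, hoAj⟩
  have hcardBj : (B j).card = (A j).card - 1 := by
    rw [hBj, Finset.card_sdiff_of_subset (Finset.singleton_subset_iff.2 hoAj), Finset.card_singleton]
  have hBclean : ∀ k, ((B k).card : ℤ) = v k (B k) := by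
    intro k
    by_cases hki : k = i
    · subst hki
      rw [hBi, hins, Finset.card_insert_of_notMem hoAi]
      push_cast
      rw [hAclean k]
    by_cases hkj : k = j
    · subst hkj
      rw [hBj]
      have hv : v k (A k \ {o}) = v k (A k) - 1 := by
        have h1 := hd1
        rw [hd] at h1
        linarith
      have hc : (A k \ {o}).card = (A k).card - 1 := by
        rw [Finset.card_sdiff_of_subset (Finset.singleton_subset_iff.2 hoAj), Finset.card_singleton]
      rw [hv, hc, ← hAclean k]
      omega
    · rw [hBk k hki hkj]; exact hAclean k
  have hBmem : B ∈ G := by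
    simp only [hG, Finset.mem_filter, Finset.mem_univ, true_and]
    exact ⟨hBalloc, hUSWeq, hBclean⟩
  -- cardinality gap
  have hgap : (A i).card + 2 ≤ (A j).card := by
    have h1 := hstrong o hoAj
    have h2 := mrf_le_card (v i) (h0 i) (hbin i) (A j \ {o})
    have h3 : ((A j \ {o}).card : ℤ) = (A j).card - 1 := by
      rw [Finset.card_sdiff_of_subset (Finset.singleton_subset_iff.2 hoAj), Finset.card_singleton]
      push_cast [hcAj1]
      omega
    have h4 := hAclean i
    rw [h3] at h2
    have : ((A i).card : ℤ) + 2 ≤ ((A j).card : ℤ) := by linarith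
    exact_mod_cast this
  -- potential decreases: contradiction
  have hsplit : ∀ g : Fin n → ℕ, ∑ k, g k = g i + g j + ∑ k ∈ Finset.univ \ {i, j}, g k := by
    intro g
    rw [← Finset.sum_sdiff (Finset.subset_univ {i, j}), Finset.sum_pair hij]
    ring
  have htail : ∑ k ∈ Finset.univ \ ({i, j} : Finset (Fin n)), (B k).card ^ 2
      = ∑ k ∈ Finset.univ \ ({i, j} : Finset (Fin n)), (A k).card ^ 2 := by
    refine Finset.sum_congr rfl fun k hk => ?_
    simp only [Finset.mem_sdiff, Finset.mem_insert, Finset.mem_singleton] at hk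
    rw [hBk k (fun h => hk.2 (Or.inl h)) (fun h => hk.2 (Or.inr h))]
  have hlt : ∑ k, (B k).card ^ 2 < ∑ k, (A k).card ^ 2 := by
    rw [hsplit (fun k => (B k).card ^ 2), hsplit (fun k => (A k).card ^ 2)]
    simp only [htail]
    have hBicard : (B i).card = (A i).card + 1 := by
      rw [hBi, Finset.card_insert_of_notMem hoAi]
    rw [hBicard, hcardBj]
    have : ∃ m, (A j).card = (A i).card + 2 + m := Nat.exists_eq_add_of_le hgap
    obtain ⟨m, hm⟩ := this
    rw [hm]
    have : (A i).card + 2 + m - 1 = (A i).card + 1 + m := by omega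
    rw [this]
    nlinarith [Finset.sum_le_sum (f := fun k => ((A k).card)^2) (g := fun k => ((A k).card)^2)
      (fun k _ => le_refl ((A k).card^2)) (s := Finset.univ \ ({i,j} : Finset (Fin n)))]
  have := hAmin B hBmem
  omega
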